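/- Let F : ℝ^n → ℝ^n be a C¹ map with fixed point x₀ = 0, and suppose all eigenvalues of the derivative A = DF(0) have absolute value strictly less than 1. Then 0 is exponentially stable: there exist a neighbourhood V of 0, constants γ > 0 and K ∈ (0,1), such that for every x ∈ V and every n ∈ ℕ, ‖F^[n](x)‖ ≤ γ K^n. -/

import Mathlib

open MeasureTheory Filter Metric Set Bornology

noncomputable def upMC {E : Type*} [PseudoMetricSpace E] [MeasurableSpace E]
    (mu : Measure E) (d s : ℝ) (A : Set E) : ℝ :=
  limsup (fun ε : ℝ => (mu (thickening ε A)).toReal / ε ^ (d - s)) (nhdsWithin 0 (Ioi 0))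

noncomputable def loMC {E : Type*} [PseudoMetricSpace E] [MeasurableSpace E]
    (mu : Measure E) (d s : ℝ) (A : Set E) : ℝ :=
  liminf (fun ε : ℝ => (mu (thickening ε A)).toReal / ε ^ (d - s)) (nhdsWithin 0 (Ioi 0))

/-- Upper box (Minkowski) dimension of `A`, in ambient dimension `d`. -/
noncomputable def upperBoxDim {E : Type*} [PseudoMetricSpace E] [MeasurableSpace E]
    (mu : Measure E) (d : ℝ) (A : Set E) : ℝ :=
  sInf {s : ℝ | 0 < s ∧ upMC mu d s A = 0}

/-- Lower box (Minkowski) dimension of `A`, in ambient dimension `d`. -/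
noncomputable def lowerBoxDim {E : Type*} [PseudoMetricSpace E] [MeasurableSpace E]
    (mu : Measure E) (d : ℝ) (A : Set E) : ℝ :=
  sInf {s : ℝ | 0 < s ∧ loMC mu d s A = 0}

/-- The spectrum (set of eigenvalues, in finite dimension) of the complexification
of a real linear endomorphism. -/
noncomputable def specC {E : Type*} [AddCommGroup E] [Module ℝ E] (f : E →ₗ[ℝ] E) : Set ℂ :=
  spectrum ℂ (LinearMap.baseChange ℂ f)

lemma norm_complexify {n : ℕ} (w : Fin n → ℝ) :
    ‖(WithLp.equiv 2 (Fin n → ℂ)).symm (fun i => (w i : ℂ))‖ =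
      ‖(WithLp.equiv 2 (Fin n → ℝ)).symm w‖ := by
  rw [EuclideanSpace.norm_eq, EuclideanSpace.norm_eq]
  simp [WithLp.equiv_symm_apply, Complex.norm_real]

lemma spec_transfer {n : ℕ} (A : EuclideanSpace ℝ (Fin n) →L[ℝ] EuclideanSpace ℝ (Fin n)) :
    specC (A.toLinearMap) = spectrum ℂ (Matrix.toEuclideanCLM (𝕜 := ℂ)
      ((LinearMap.toMatrix (PiLp.basisFun 2 ℝ (Fin n)) (PiLp.basisFun 2 ℝ (Fin n))
        A.toLinearMap).map (algebraMap ℝ ℂ))) := by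
  set b := PiLp.basisFun 2 ℝ (Fin n)
  set M := LinearMap.toMatrix b b A.toLinearMap with hM
  rw [AlgEquiv.spectrum_eq (Matrix.toEuclideanCLM (𝕜 := ℂ) (n := Fin n))]
  unfold specC
  rw [← AlgEquiv.spectrum_eq (LinearMap.toMatrixAlgEquiv (Algebra.TensorProduct.basis ℂ b))]
  rw [LinearMap.toMatrixAlgEquiv]
  simp [LinearMap.toMatrix_baseChange, hM]

lemma spectral_aux {n : ℕ} (hn : 0 < n)
    (A : EuclideanSpace ℝ (Fin n) →L[ℝ] EuclideanSpace ℝ (Fin n))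
    (heig : ∀ μ ∈ specC A.toLinearMap, ‖μ‖ < 1) :
    ∃ N : ℕ, 0 < N ∧ ∃ c : ℝ, 0 ≤ c ∧ c < 1 ∧ ∀ x, ‖(A ^ N) x‖ ≤ c * ‖x‖ := by
  haveI : Nonempty (Fin n) := Fin.pos_iff_nonempty.mp hn
  set b := PiLp.basisFun 2 ℝ (Fin n)
  set M := LinearMap.toMatrix b b A.toLinearMap with hM
  set B := Matrix.toEuclideanCLM (𝕜 := ℂ) (M.map (algebraMap ℝ ℂ)) with hB
  have hspec : ∀ μ ∈ spectrum ℂ B, ‖μ‖ < 1 := by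
    rw [← spec_transfer A]; exact heig
  have hrad : spectralRadius ℂ B < 1 := by
    obtain ⟨z, hz, hz2⟩ := spectrum.exists_nnnorm_eq_spectralRadius B
    rw [← hz2]
    exact_mod_cast hspec z hz
  have hG := spectrum.pow_nnnorm_pow_one_div_tendsto_nhds_spectralRadius B
  have hev : ∀ᶠ N : ℕ in atTop, (‖B ^ N‖₊ : ENNReal) ^ (1 / (N:ℝ)) < 1 :=
    hG.eventually_lt_const hrad
  obtain ⟨N, hN1, hNlt⟩ := (hev.and (eventually_ge_atTop 1)).exists
  refine ⟨N, hNlt, ‖B ^ N‖, norm_nonneg _, ?_, ?_⟩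
  · have hlt : (‖B ^ N‖₊ : ENNReal) < 1 := by
      by_contra h
      push_neg at h
      have : (1:ENNReal) ≤ (‖B ^ N‖₊ : ENNReal) ^ (1 / (N:ℝ)) := by
        calc (1:ENNReal) = 1 ^ (1 / (N:ℝ)) := (ENNReal.one_rpow _).symm
        _ ≤ (‖B ^ N‖₊ : ENNReal) ^ (1 / (N:ℝ)) :=
          ENNReal.rpow_le_rpow h (by positivity)
      exact absurd hN1 this.not_gt
    have : ‖B ^ N‖₊ < 1 := by exact_mod_cast hlt
    exact this
  · intro x
    set v : Fin n → ℝ := WithLp.equiv 2 (Fin n → ℝ) x with hv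
    set xc : EuclideanSpace ℂ (Fin n) := (WithLp.equiv 2 (Fin n → ℂ)).symm (fun i => (v i : ℂ))
      with hxc
    have hMN : M ^ N = LinearMap.toMatrix b b (A.toLinearMap ^ N) := by
      rw [hM]
      exact (map_pow (LinearMap.toMatrixAlgEquiv b) A.toLinearMap N).symm
    have hApow : (A ^ N) x = Matrix.toEuclideanLin (M ^ N) x := by
      rw [hMN]
      have : Matrix.toEuclideanLin (LinearMap.toMatrix b b (A.toLinearMap ^ N)) =
          A.toLinearMap ^ N := by
        rw [Matrix.toEuclideanLin_eq_toLin]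
        exact Matrix.toLin_toMatrix b b _
      rw [this]
      have h2 := map_pow (ContinuousLinearMap.toLinearMapRingHom
        (R₁ := ℝ) (M₁ := EuclideanSpace ℝ (Fin n))) A N
      exact DFunLike.congr_fun h2 x
    have hBpow : B ^ N = Matrix.toEuclideanCLM (𝕜 := ℂ) ((M ^ N).map (algebraMap ℝ ℂ)) := by
      rw [hB, ← map_pow, ← RingHom.mapMatrix_apply, ← RingHom.mapMatrix_apply, ← map_pow]
    have hcoords : (B ^ N) xc =
        (WithLp.equiv 2 (Fin n → ℂ)).symm (fun i => (((M ^ N).mulVec v) i : ℂ)) := by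
      rw [hBpow, hxc, WithLp.equiv_symm_apply, Matrix.toEuclideanCLM_toLp]
      congr 1
      ext i
      simp [Matrix.mulVec, dotProduct, Matrix.map_apply]
    have hA2 : (A ^ N) x = (WithLp.equiv 2 (Fin n → ℝ)).symm ((M ^ N).mulVec v) := by
      rw [hApow, Matrix.toEuclideanLin_apply]
      rfl
    have hnorm1 : ‖(A ^ N) x‖ = ‖(B ^ N) xc‖ := by
      rw [hA2, hcoords, norm_complexify ((M ^ N).mulVec v)]
    have hnorm2 : ‖xc‖ = ‖x‖ := by
      rw [hxc, norm_complexify, hv]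
      simp
    calc ‖(A ^ N) x‖ = ‖(B ^ N) xc‖ := hnorm1
      _ ≤ ‖B ^ N‖ * ‖xc‖ := (B ^ N).le_opNorm xc
      _ = ‖B ^ N‖ * ‖x‖ := by rw [hnorm2]

set_option maxHeartbeats 1000000 in
theorem stmt1 {n : ℕ} (F : EuclideanSpace ℝ (Fin n) → EuclideanSpace ℝ (Fin n))
    (hF : ContDiff ℝ 1 F) (h0 : F 0 = 0)
    (heig : ∀ μ ∈ specC (fderiv ℝ F 0).toLinearMap, ‖μ‖ < 1) :
    ∃ V ∈ nhds (0 : EuclideanSpace ℝ (Fin n)), ∃ γ > (0:ℝ), ∃ K ∈ Set.Ioo (0:ℝ) 1,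
      ∀ x ∈ V, ∀ m : ℕ, ‖F^[m] x‖ ≤ γ * K ^ m := by
  rcases Nat.eq_zero_or_pos n with hn | hn
  · subst hn
    refine ⟨Set.univ, Filter.univ_mem, 1, one_pos, 1/2, ⟨by norm_num, by norm_num⟩, ?_⟩
    intro x _ m
    have h1 : (F^[m] x) = 0 := Subsingleton.elim _ _
    rw [h1]
    simp only [norm_zero]
    positivity
  set A := fderiv ℝ F 0 with hA
  obtain ⟨N, hN, c, hc0, hc1, hAc⟩ := spectral_aux hn A heig
  have hfix : ∀ k : ℕ, F^[k] 0 = 0 := fun k => Function.iterate_fixed h0 k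
  have hdF : ∀ x, HasFDerivAt F (fderiv ℝ F x) x := fun x =>
    (hF.differentiable one_ne_zero x).hasFDerivAt
  have hiter : ∀ k : ℕ, HasFDerivAt (F^[k]) (A ^ k) 0 := by
    intro k
    induction k with
    | zero =>
      simpa [Function.iterate_zero, ContinuousLinearMap.one_def] using
        hasFDerivAt_id (0 : EuclideanSpace ℝ (Fin n))
    | succ k ih =>
      rw [Function.iterate_succ']
      have h2 : HasFDerivAt F A (F^[k] 0) := by rw [hfix k]; exact hdF 0
      simpa [pow_succ', ContinuousLinearMap.mul_def] using h2.comp 0 ih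
  set ε := (1 - c) / 2 with hεdef
  have hε0 : 0 < ε := by rw [hεdef]; linarith
  set c' := c + ε with hc'def
  have hc'1 : c' < 1 := by rw [hc'def, hεdef]; linarith
  have hc'0 : 0 < c' := by rw [hc'def]; linarith
  -- contraction estimate for F^[N] near 0
  have hev1 : ∀ᶠ y in nhds (0 : EuclideanSpace ℝ (Fin n)), ‖F^[N] y‖ ≤ c' * ‖y‖ := by
    have hlo := (hiter N).isLittleO.def hε0
    filter_upwards [hlo] with y hy
    rw [hfix N, sub_zero, sub_zero] at hy
    calc ‖F^[N] y‖ = ‖(F^[N] y - (A ^ N) y) + (A ^ N) y‖ := by rw [sub_add_cancel]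
      _ ≤ ‖F^[N] y - (A ^ N) y‖ + ‖(A ^ N) y‖ := norm_add_le _ _
      _ ≤ ε * ‖y‖ + c * ‖y‖ := add_le_add hy (hAc y)
      _ = c' * ‖y‖ := by rw [hc'def]; ring
  -- Lipschitz near 0
  obtain ⟨K₀, t, ht, hK₀⟩ := (hF.contDiffAt).exists_lipschitzOnWith
  obtain ⟨r1, hr10, hr1⟩ := Metric.eventually_nhds_iff_ball.mp hev1
  obtain ⟨r2, hr20, hr2⟩ := Metric.mem_nhds_iff.mp ht
  set L : ℝ := max (K₀ : ℝ) 1 with hLdef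
  have hL1 : (1:ℝ) ≤ L := le_max_right _ _
  have hL0 : (0:ℝ) < L := lt_of_lt_of_le one_pos hL1
  have hLN0 : (0:ℝ) < L ^ N := pow_pos hL0 N
  have hLN1 : (1:ℝ) ≤ L ^ N := by simpa using pow_le_pow_left₀ zero_le_one hL1 N
  have hLip : ∀ y : EuclideanSpace ℝ (Fin n), y ∈ ball (0 : EuclideanSpace ℝ (Fin n)) r2 →
      ‖F y‖ ≤ L * ‖y‖ := by
    intro y hy
    have h0t : (0 : EuclideanSpace ℝ (Fin n)) ∈ ball (0 : EuclideanSpace ℝ (Fin n)) r2 :=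
      mem_ball_self hr20
    have := (hK₀.mono hr2).dist_le_mul y hy 0 h0t
    rw [h0, dist_zero_right, dist_zero_right] at this
    calc ‖F y‖ ≤ (K₀ : ℝ) * ‖y‖ := this
      _ ≤ L * ‖y‖ := mul_le_mul_of_nonneg_right (le_max_left _ _) (norm_nonneg _)
  set r0 := min r1 r2 with hr0def
  have hr00 : 0 < r0 := lt_min hr10 hr20
  set ρ := r0 / (2 * L ^ N) with hρdef
  have hρ0 : 0 < ρ := by positivity
  have hρr0 : ρ ≤ r0 / 2 := by
    rw [hρdef]
    rw [div_le_div_iff₀ (by positivity) (by norm_num)]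
    nlinarith
  -- intermediate iterates
  have key1 : ∀ x : EuclideanSpace ℝ (Fin n), ‖x‖ < ρ → ∀ j, j ≤ N →
      ‖F^[j] x‖ ≤ L ^ j * ‖x‖ := by
    intro x hx j hj
    induction j with
    | zero => simp
    | succ j ih =>
      have hj' : j ≤ N := Nat.le_of_succ_le hj
      have hFj := ih hj'
      have hbound : ‖F^[j] x‖ < r2 := by
        calc ‖F^[j] x‖ ≤ L ^ j * ‖x‖ := hFj
          _ ≤ L ^ N * ‖x‖ := mul_le_mul_of_nonneg_right
              (pow_le_pow_right₀ hL1 hj') (norm_nonneg _)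
          _ < L ^ N * ρ := by
              exact mul_lt_mul_of_pos_left hx hLN0
          _ = r0 / 2 := by rw [hρdef]; field_simp
          _ < r0 := by linarith
          _ ≤ r2 := min_le_right _ _
      have hmem : F^[j] x ∈ ball (0 : EuclideanSpace ℝ (Fin n)) r2 := by
        rw [mem_ball, dist_zero_right]; exact hbound
      rw [Function.iterate_succ_apply']
      calc ‖F (F^[j] x)‖ ≤ L * ‖F^[j] x‖ := hLip _ hmem
        _ ≤ L * (L ^ j * ‖x‖) := mul_le_mul_of_nonneg_left hFj (le_of_lt hL0)
        _ = L ^ (j+1) * ‖x‖ := by ring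
  have key2 : ∀ x : EuclideanSpace ℝ (Fin n), ‖x‖ < ρ → ‖F^[N] x‖ ≤ c' * ‖x‖ := by
    intro x hx
    apply hr1
    rw [mem_ball, dist_zero_right]
    calc ‖x‖ < ρ := hx
      _ ≤ r0 / 2 := hρr0
      _ < r0 := by linarith
      _ ≤ r1 := min_le_left _ _
  have key3 : ∀ q : ℕ, ∀ x : EuclideanSpace ℝ (Fin n), ‖x‖ < ρ →
      ‖(F^[N])^[q] x‖ ≤ c' ^ q * ‖x‖ := by
    intro q
    induction q with
    | zero => intro x _; simp
    | succ q ih =>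
      intro x hx
      have h1 := ih x hx
      have hq1 : c' ^ q ≤ 1 := pow_le_one₀ (le_of_lt hc'0) (le_of_lt hc'1)
      have hmem : ‖(F^[N])^[q] x‖ < ρ := by
        calc ‖(F^[N])^[q] x‖ ≤ c' ^ q * ‖x‖ := h1
          _ ≤ 1 * ‖x‖ := mul_le_mul_of_nonneg_right hq1 (norm_nonneg _)
          _ = ‖x‖ := one_mul _
          _ < ρ := hx
      rw [Function.iterate_succ_apply']
      calc ‖F^[N] ((F^[N])^[q] x)‖ ≤ c' * ‖(F^[N])^[q] x‖ := key2 _ hmem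
        _ ≤ c' * (c' ^ q * ‖x‖) := mul_le_mul_of_nonneg_left h1 (le_of_lt hc'0)
        _ = c' ^ (q+1) * ‖x‖ := by ring
  -- conclusion
  set K : ℝ := c' ^ ((1:ℝ) / N) with hKdef
  have hK0 : 0 < K := Real.rpow_pos_of_pos hc'0 _
  have hK1 : K < 1 := Real.rpow_lt_one (le_of_lt hc'0) hc'1 (by positivity)
  refine ⟨ball 0 ρ, ball_mem_nhds _ hρ0, (L ^ N * ρ) / c', by positivity, K, ⟨hK0, hK1⟩, ?_⟩
  intro x hx m
  rw [mem_ball, dist_zero_right] at hx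
  obtain ⟨q, s, hsN, hm⟩ : ∃ q s, s < N ∧ m = s + N * q :=
    ⟨m / N, m % N, Nat.mod_lt m hN, by rw [Nat.add_comm]; exact (Nat.div_add_mod m N).symm⟩
  have hsplit : F^[m] x = F^[s] ((F^[N])^[q] x) := by
    rw [hm, Function.iterate_add_apply, Function.iterate_mul]
  set y := (F^[N])^[q] x with hy
  have hyb : ‖y‖ ≤ c' ^ q * ‖x‖ := key3 q x hx
  have hylt : ‖y‖ < ρ := by
    have hq1 : c' ^ q ≤ 1 := pow_le_one₀ (le_of_lt hc'0) (le_of_lt hc'1)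
    calc ‖y‖ ≤ c' ^ q * ‖x‖ := hyb
      _ ≤ 1 * ‖x‖ := mul_le_mul_of_nonneg_right hq1 (norm_nonneg _)
      _ = ‖x‖ := one_mul _
      _ < ρ := hx
  have hstep : ‖F^[m] x‖ ≤ L ^ N * (c' ^ q * ρ) := by
    rw [hsplit]
    calc ‖F^[s] y‖ ≤ L ^ s * ‖y‖ := key1 y hylt s (le_of_lt hsN)
      _ ≤ L ^ N * ‖y‖ := mul_le_mul_of_nonneg_right
          (pow_le_pow_right₀ hL1 (le_of_lt hsN)) (norm_nonneg _)
      _ ≤ L ^ N * (c' ^ q * ‖x‖) := mul_le_mul_of_nonneg_left hyb (le_of_lt hLN0)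
      _ ≤ L ^ N * (c' ^ q * ρ) := by
          apply mul_le_mul_of_nonneg_left _ (le_of_lt hLN0)
          exact mul_le_mul_of_nonneg_left (le_of_lt hx) (pow_nonneg (le_of_lt hc'0) q)
  have hKm : c' ^ (q + 1) ≤ K ^ m := by
    have h1 : K ^ m = c' ^ (((1:ℝ)/N) * m) := by
      rw [hKdef, ← Real.rpow_natCast (c' ^ ((1:ℝ)/N)) m, ← Real.rpow_mul (le_of_lt hc'0)]
    have h2 : ((1:ℝ)/N) * m ≤ (q + 1 : ℕ) := by
      rw [div_mul_eq_mul_div, one_mul, div_le_iff₀ (by exact_mod_cast hN)]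
      push_cast
      have : (m:ℝ) = (s:ℝ) + (N:ℝ) * (q:ℝ) := by exact_mod_cast hm
      rw [this]
      have hsr : (s:ℝ) < N := by exact_mod_cast hsN
      nlinarith [Nat.cast_nonneg (α := ℝ) q, Nat.cast_nonneg (α := ℝ) N]
    calc c' ^ (q + 1) = c' ^ ((q + 1 : ℕ) : ℝ) := by
          rw [Real.rpow_natCast]
      _ ≤ c' ^ (((1:ℝ)/N) * m) :=
          Real.rpow_le_rpow_of_exponent_ge hc'0 (le_of_lt hc'1) h2
      _ = K ^ m := h1.symm
  calc ‖F^[m] x‖ ≤ L ^ N * (c' ^ q * ρ) := hstep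
    _ = (L ^ N * ρ) / c' * c' ^ (q + 1) := by field_simp; ring
    _ ≤ (L ^ N * ρ) / c' * K ^ m := by
        apply mul_le_mul_of_nonneg_left hKm
        positivity
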